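/- Let n ≥ 2, q ≥ nd, σ, σ_1,…,σ_n ∈ R^{d×q}, p_1,…,p_n ∈ (0,1) with Σ_i p_i = 1, and set Σ_i = σ_i σ_i*. Then the existence of Γ ∈ S_+(nd) with i-th diagonal d×d block equal to Σ_i and σσ* ≤ (p_1 I_d,…,p_n I_d) Γ (p_1 I_d,…,p_n I_d)* is equivalent to the existence of orthogonal matrices O_1,…,O_n ∈ R^{q×q} such that σσ* ≤ (Σ_i p_i σ_i O_i)(Σ_i p_i σ_i O_i)*. -/

import Mathlib

open MeasureTheory ProbabilityTheory Matrix

/-- The positive semidefinite square root of a positive semidefinite matrix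
(the definition `Matrix.PosSemidef.sqrt` of the older Mathlib, removed since). -/
noncomputable def Matrix.PosSemidef.sqrt {n 𝕜 : Type*} [Fintype n] [DecidableEq n] [RCLike 𝕜]
    [PartialOrder 𝕜] {A : Matrix n n 𝕜} (hA : A.PosSemidef) : Matrix n n 𝕜 :=
  (hA.1.eigenvectorUnitary : Matrix n n 𝕜) *
    diagonal (fun i => ((√(hA.1.eigenvalues i) : ℝ) : 𝕜)) *
    (star hA.1.eigenvectorUnitary : Matrix n n 𝕜)

noncomputable def stdGaussianPi (d : ℕ) : Measure (Fin d → ℝ) :=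
  Measure.pi fun _ => gaussianReal 0 1

/-- The Gaussian law `N_d(m, S)` on `ℝ^d`, defined as the image of the standard Gaussian
by `z ↦ m + S^{1/2} z`. -/
noncomputable def gaussianPi {d : ℕ} (m : Fin d → ℝ) {S : Matrix (Fin d) (Fin d) ℝ}
    (hS : S.PosSemidef) : Measure (Fin d → ℝ) :=
  Measure.map (fun z => m + hS.sqrt.mulVec z) (stdGaussianPi d)

/-- Convex order between measures: `μ ≤_cx ν`. -/
def ConvexOrder {E : Type*} [NormedAddCommGroup E] [NormedSpace ℝ E] [MeasurableSpace E]
    (μ ν : Measure E) : Prop :=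
  ∀ φ : E → ℝ, ConvexOn ℝ Set.univ φ → Integrable φ μ → Integrable φ ν →
    ∫ x, φ x ∂μ ≤ ∫ x, φ x ∂ν

lemma psd_sqrt_transpose_real {m : Type*} [Fintype m] [DecidableEq m] {A : Matrix m m ℝ}
    (hA : A.PosSemidef) : hA.sqrtᵀ = hA.sqrt := by
  unfold Matrix.PosSemidef.sqrt
  rw [Matrix.transpose_mul, Matrix.transpose_mul, Matrix.diagonal_transpose,
    Matrix.star_eq_conjTranspose, Matrix.conjTranspose_eq_transpose_of_trivial,
    Matrix.transpose_transpose, Matrix.mul_assoc]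

lemma psd_sqrt_mul_self_real {m : Type*} [Fintype m] [DecidableEq m] {A : Matrix m m ℝ}
    (hA : A.PosSemidef) : hA.sqrt * hA.sqrt = A := by
  unfold Matrix.PosSemidef.sqrt
  conv_rhs => rw [hA.1.spectral_theorem]
  rw [Unitary.conjStarAlgAut_apply]
  have hu : (star hA.1.eigenvectorUnitary : Matrix m m ℝ) * (hA.1.eigenvectorUnitary : Matrix m m ℝ) = 1 := by
    simp
  have hd : diagonal (fun i => ((√(hA.1.eigenvalues i) : ℝ) : ℝ)) *
      diagonal (fun i => ((√(hA.1.eigenvalues i) : ℝ) : ℝ))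
      = diagonal (RCLike.ofReal ∘ hA.1.eigenvalues) := by
    rw [diagonal_mul_diagonal]
    congr 1
    funext i
    simp [Real.mul_self_sqrt (hA.eigenvalues_nonneg i)]
  calc _ = (hA.1.eigenvectorUnitary : Matrix m m ℝ) * diagonal (fun i => ((√(hA.1.eigenvalues i) : ℝ) : ℝ)) *
      ((star hA.1.eigenvectorUnitary : Matrix m m ℝ) * (hA.1.eigenvectorUnitary : Matrix m m ℝ)) *
      diagonal (fun i => ((√(hA.1.eigenvalues i) : ℝ) : ℝ)) * (star hA.1.eigenvectorUnitary : Matrix m m ℝ) := by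
        simp only [Matrix.mul_assoc]; rfl
    _ = _ := by rw [hu, Matrix.mul_one, Matrix.mul_assoc _ (diagonal _) (diagonal _), hd]

lemma exists_orthogonal_of_mul_transpose_eq {d q : ℕ}
    (σ Θ : Matrix (Fin d) (Fin q) ℝ) (h : Θ * Θᵀ = σ * σᵀ) :
    ∃ O : Matrix (Fin q) (Fin q) ℝ, O * Oᵀ = 1 ∧ Θ = σ * O := by
  classical
  set f := Matrix.toEuclideanLin σᵀ with hf
  set g := Matrix.toEuclideanLin Θᵀ with hg
  have hdot : ∀ (A : Matrix (Fin d) (Fin q) ℝ) (x y : EuclideanSpace ℝ (Fin d)),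
      (inner ℝ (Matrix.toEuclideanLin Aᵀ x) (Matrix.toEuclideanLin Aᵀ y) : ℝ)
        = ((A * Aᵀ) *ᵥ (WithLp.equiv 2 (Fin d → ℝ) x)) ⬝ᵥ (WithLp.equiv 2 (Fin d → ℝ) y) := by
    intro A x y
    simp only [Matrix.toEuclideanLin_apply, PiLp.inner_apply, RCLike.inner_apply, conj_trivial]
    rw [Finset.sum_congr rfl fun k _ => mul_comm ((Aᵀ *ᵥ y.ofLp) k) _]
    change (Aᵀ *ᵥ _) ⬝ᵥ (Aᵀ *ᵥ _) = _
    rw [Matrix.dotProduct_mulVec, Matrix.vecMul_transpose, Matrix.mulVec_mulVec]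
    rfl
  have hnorm : ∀ x, ‖g x‖ = ‖f x‖ := by
    intro x
    have h1 : (inner ℝ (g x) (g x) : ℝ) = inner ℝ (f x) (f x) := by
      rw [hf, hg, hdot, hdot, h]
    rw [norm_eq_sqrt_real_inner, norm_eq_sqrt_real_inner, h1]
  have hker : LinearMap.ker f ≤ LinearMap.ker g := by
    intro x hx
    rw [LinearMap.mem_ker] at hx ⊢
    have := hnorm x
    rw [hx, norm_zero] at this
    exact norm_eq_zero.mp this
  let L0 : LinearMap.range f →ₗ[ℝ] EuclideanSpace ℝ (Fin q) :=
    ((LinearMap.ker f).liftQ g hker) ∘ₗ (f.quotKerEquivRange).symm.toLinearMap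
  have hL0 : ∀ x : EuclideanSpace ℝ (Fin d),
      L0 ⟨f x, LinearMap.mem_range_self f x⟩ = g x := by
    intro x
    simp only [L0, LinearMap.coe_comp, Function.comp_apply, LinearEquiv.coe_coe,
      LinearMap.quotKerEquivRange_symm_apply_image]
    exact Submodule.liftQ_apply _ g x
  have hL0n : ∀ s : LinearMap.range f, ‖L0 s‖ = ‖s‖ := by
    rintro ⟨s, x, rfl⟩
    rw [hL0 x]
    exact (hnorm x).trans rfl
  let L : LinearMap.range f →ₗᵢ[ℝ] EuclideanSpace ℝ (Fin q) := ⟨L0, hL0n⟩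
  let U := L.extend
  have hU : ∀ x, U (f x) = g x := by
    intro x
    have := L.extend_apply ⟨f x, LinearMap.mem_range_self f x⟩
    rw [← hL0 x]
    exact this
  let O' : Matrix (Fin q) (Fin q) ℝ := Matrix.toEuclideanLin.symm U.toLinearMap
  have hO' : Matrix.toEuclideanLin O' = U.toLinearMap := by
    simp [O']
  have hcomp : O' * σᵀ = Θᵀ := by
    apply Matrix.toEuclideanLin.injective
    ext1 x
    have h1 : Matrix.toEuclideanLin (O' * σᵀ) x
        = Matrix.toEuclideanLin O' (Matrix.toEuclideanLin σᵀ x) := by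
      simp only [Matrix.toEuclideanLin_apply, Equiv.apply_symm_apply, Matrix.mulVec_mulVec]
    rw [h1, hO']
    exact hU x
  have hcol : ∀ (i k : Fin q),
      O' k i = U ((WithLp.equiv 2 (Fin q → ℝ)).symm (Pi.single i 1)) k := by
    intro i k
    have h4 : U ((WithLp.equiv 2 (Fin q → ℝ)).symm (Pi.single i 1))
        = Matrix.toEuclideanLin O' ((WithLp.equiv 2 (Fin q → ℝ)).symm (Pi.single i 1)) := by
      rw [hO']; rfl
    rw [h4, Matrix.toEuclideanLin_apply]
    simp [Matrix.mulVec_single, WithLp.equiv_symm_apply, PiLp.toLp_apply, Equiv.apply_symm_apply]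
  have horth : O'ᵀ * O' = 1 := by
    ext i j
    have hinner := U.inner_map_map ((WithLp.equiv 2 (Fin q → ℝ)).symm (Pi.single i 1))
      ((WithLp.equiv 2 (Fin q → ℝ)).symm (Pi.single j 1))
    simp only [PiLp.inner_apply, RCLike.inner_apply, conj_trivial] at hinner
    have lhs : (O'ᵀ * O') i j = ∑ k, O' k i * O' k j := by
      simp [Matrix.mul_apply, Matrix.transpose_apply]
    rw [lhs]
    calc ∑ k, O' k i * O' k j
        = ∑ k, (U ((WithLp.equiv 2 (Fin q → ℝ)).symm (Pi.single i 1))) k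
            * (U ((WithLp.equiv 2 (Fin q → ℝ)).symm (Pi.single j 1))) k :=
          Finset.sum_congr rfl fun k _ => by rw [hcol i k, hcol j k]
      _ = ∑ k, ((WithLp.equiv 2 (Fin q → ℝ)).symm (Pi.single i 1) : EuclideanSpace ℝ (Fin q)) k
            * ((WithLp.equiv 2 (Fin q → ℝ)).symm (Pi.single j 1) : EuclideanSpace ℝ (Fin q)) k :=
          (Finset.sum_congr rfl fun k _ => mul_comm _ _).trans
            (hinner.trans (Finset.sum_congr rfl fun k _ => mul_comm _ _))
      _ = (1 : Matrix (Fin q) (Fin q) ℝ) i j := by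
          simp only [WithLp.equiv_symm_apply, PiLp.toLp_apply]
          rw [Matrix.one_apply]
          by_cases hij : i = j
          · subst hij; simp [Pi.single_apply]
          · simp [Pi.single_apply, hij]
            intro h'
            exact absurd h'.symm hij
  refine ⟨O'ᵀ, ?_, ?_⟩
  · rw [Matrix.transpose_transpose, horth]
  · have := congrArg Matrix.transpose hcomp
    rw [Matrix.transpose_mul, Matrix.transpose_transpose, Matrix.transpose_transpose] at this
    exact this.symm

lemma blockP_mul {n d q : ℕ} (p : Fin n → ℝ) (B : Matrix (Fin n × Fin d) (Fin q) ℝ) :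
    (Matrix.of fun (k : Fin d) (il : Fin n × Fin d) =>
        p il.1 * (if k = il.2 then (1:ℝ) else 0)) * B
      = ∑ i, p i • (Matrix.of fun k c => B (i, k) c) := by
  ext k c
  simp only [Matrix.mul_apply, Matrix.of_apply, Matrix.sum_apply, Matrix.smul_apply,
    smul_eq_mul, Fintype.sum_prod_type]
  refine Finset.sum_congr rfl fun i _ => ?_
  rw [Finset.sum_eq_single k]
  · simp
  · intro l _ hl
    simp [Ne.symm hl]
  · simp

theorem stmt11 {n d q : ℕ} (hn : 2 ≤ n) (hq : n * d ≤ q)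
    (σ : Matrix (Fin d) (Fin q) ℝ) (σs : Fin n → Matrix (Fin d) (Fin q) ℝ)
    (p : Fin n → ℝ) (hp : ∀ i, p i ∈ Set.Ioo (0:ℝ) 1) (hp1 : ∑ i, p i = 1) :
    (∃ Γ : Matrix (Fin n × Fin d) (Fin n × Fin d) ℝ, Γ.PosSemidef ∧
        (∀ i : Fin n, (Matrix.of fun k l => Γ (i, k) (i, l)) = σs i * (σs i)ᵀ) ∧
        ((Matrix.of fun (k : Fin d) (il : Fin n × Fin d) =>
            p il.1 * (if k = il.2 then (1:ℝ) else 0)) * Γ *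
          (Matrix.of fun (k : Fin d) (il : Fin n × Fin d) =>
            p il.1 * (if k = il.2 then (1:ℝ) else 0))ᵀ - σ * σᵀ).PosSemidef) ↔
      (∃ O : Fin n → Matrix (Fin q) (Fin q) ℝ, (∀ i, O i * (O i)ᵀ = 1) ∧
        ((∑ i, p i • (σs i * O i)) * (∑ i, p i • (σs i * O i))ᵀ - σ * σᵀ).PosSemidef) := by
  classical
  set P : Matrix (Fin d) (Fin n × Fin d) ℝ :=
    Matrix.of fun (k : Fin d) (il : Fin n × Fin d) =>
      p il.1 * (if k = il.2 then (1:ℝ) else 0) with hP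
  constructor
  · rintro ⟨Γ, hΓ, hdiag, hpsd⟩
    -- factor Γ = C * Cᵀ with C of width q
    let e : Fin n × Fin d ↪ Fin q :=
      (finProdFinEquiv.toEmbedding).trans (Fin.castLEEmb hq)
    let E : Matrix (Fin n × Fin d) (Fin q) ℝ :=
      Matrix.of fun x c => if e x = c then (1:ℝ) else 0
    have hE : E * Eᵀ = 1 := by
      ext x y
      simp only [Matrix.mul_apply, Matrix.transpose_apply, Matrix.of_apply, E,
        ite_mul, one_mul, zero_mul]
      rw [Finset.sum_eq_single (e x)]
      · simp only [if_pos rfl, one_mul, Matrix.one_apply]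
        by_cases hxy : x = y
        · subst hxy; simp
        · rw [if_neg (fun hc : e y = e x => hxy (e.injective hc.symm)), if_neg hxy]
          simp
      · intro c _ hc; simp [Ne.symm hc]
      · simp
    let C : Matrix (Fin n × Fin d) (Fin q) ℝ := hΓ.sqrt * E
    have hsqT : hΓ.sqrtᵀ = hΓ.sqrt := by
      exact psd_sqrt_transpose_real hΓ
    have hCC : C * Cᵀ = Γ := by
      simp only [C, Matrix.transpose_mul, hsqT]
      calc hΓ.sqrt * E * (Eᵀ * hΓ.sqrt) = hΓ.sqrt * (E * Eᵀ) * hΓ.sqrt := by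
            rw [Matrix.mul_assoc, Matrix.mul_assoc, Matrix.mul_assoc]
        _ = hΓ.sqrt * hΓ.sqrt := by rw [hE, Matrix.mul_one]
        _ = Γ := psd_sqrt_mul_self_real hΓ
    -- row blocks of C
    have hblock : ∀ i : Fin n,
        (Matrix.of fun k c => C (i, k) c) * (Matrix.of fun k c => C (i, k) c)ᵀ
          = σs i * (σs i)ᵀ := by
      intro i
      ext k l
      have h1 : ((Matrix.of fun k c => C (i, k) c) * (Matrix.of fun k c => C (i, k) c)ᵀ) k l
          = (C * Cᵀ) (i, k) (i, l) := by
        simp [Matrix.mul_apply]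
      rw [h1, hCC, ← hdiag i]
      rfl
    choose O hO hCO using fun i =>
      exists_orthogonal_of_mul_transpose_eq (σs i) _ (hblock i)
    refine ⟨O, hO, ?_⟩
    have hPC : P * C = ∑ i, p i • (σs i * O i) := by
      rw [hP, blockP_mul]
      exact Finset.sum_congr rfl fun i _ => by rw [← hCO i]
    have hPX : ∀ X : Matrix (Fin n × Fin d) (Fin q) ℝ,
        P * (X * Xᵀ) * Pᵀ = (P * X) * (P * X)ᵀ := by
      intro X
      rw [Matrix.transpose_mul, ← Matrix.mul_assoc, ← Matrix.mul_assoc]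
    rw [← hPC, ← hPX C, hCC]
    exact hpsd
  · rintro ⟨O, hO, hpsd⟩
    let B : Matrix (Fin n × Fin d) (Fin q) ℝ :=
      Matrix.of fun il c => (σs il.1 * O il.1) il.2 c
    refine ⟨B * Bᵀ, ?_, ?_, ?_⟩
    · have := Matrix.posSemidef_self_mul_conjTranspose B
      rwa [Matrix.conjTranspose_eq_transpose_of_trivial] at this
    · intro i
      ext k l
      have h1 : (B * Bᵀ) (i, k) (i, l) = ((σs i * O i) * (σs i * O i)ᵀ) k l := by
        simp only [Matrix.mul_apply, Matrix.transpose_apply, Matrix.of_apply, B]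
      have h2 : (σs i * O i) * (σs i * O i)ᵀ = σs i * (σs i)ᵀ := by
        rw [Matrix.transpose_mul, ← Matrix.mul_assoc, Matrix.mul_assoc (σs i), hO i,
          Matrix.mul_one]
      simp only [Matrix.of_apply]
      rw [h1, h2]
    · have hPB : P * B = ∑ i, p i • (σs i * O i) := by
        rw [hP, blockP_mul]
        exact Finset.sum_congr rfl fun i _ => rfl
      have hPG : P * (B * Bᵀ) * Pᵀ = (P * B) * (P * B)ᵀ := by
        rw [Matrix.transpose_mul, ← Matrix.mul_assoc, ← Matrix.mul_assoc]
      rw [hPG, hPB]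
      exact hpsd
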